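/- Let Q be any real polynomial and let σ < τ be real numbers. Define r(x) = (1/(2π)) · ∫_σ^τ D(x,t) · √((t−σ)(τ−t)) dt + (1/2)·((σ+τ)/2 − x)·Q'(x) + 1. Then (1/π) · ∫_σ^τ r(x)/√((x−σ)(τ−x)) dx = 1; that is, the measure with density h(x) = (1/π)·r(x)/√((x−σ)(τ−x)) on [σ,τ] has total mass 1. -/

import Mathlib

open MeasureTheory intervalIntegral

/-- The divided difference `D(x,t) = (Q'(x) − Q'(t))/(x − t)` for `t ≠ x`, `D(x,x) = Q''(x)`. -/
noncomputable def divDiff (Q : Polynomial ℝ) (x t : ℝ) : ℝ :=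
  if x = t then Q.derivative.derivative.eval x
  else (Q.derivative.eval x - Q.derivative.eval t) / (x - t)

/-- `r(x) = (1/(2π)) ∫_σ^τ D(x,t)·√((t−σ)(τ−t)) dt + (1/2)·((σ+τ)/2 − x)·Q'(x) + 1`. -/
noncomputable def rFun (Q : Polynomial ℝ) (σ τ x : ℝ) : ℝ :=
  (1 / (2 * Real.pi)) * (∫ t in σ..τ, divDiff Q x t * Real.sqrt ((t - σ) * (τ - t)))
    + (1 / 2) * ((σ + τ) / 2 - x) * Q.derivative.eval x + 1

open Polynomial Finset



noncomputable def w (σ τ x : ℝ) : ℝ := Real.sqrt ((x - σ) * (τ - x))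

lemma continuous_w (σ τ : ℝ) : Continuous (w σ τ) := by
  unfold w
  exact ((continuous_id.sub continuous_const).mul (continuous_const.sub continuous_id)).sqrt

lemma intervalIntegrable_div_w {σ τ : ℝ} (hστ : σ < τ) {f : ℝ → ℝ} (hf : Continuous f) :
    IntervalIntegrable (fun x => f x / w σ τ x) volume σ τ := by
  obtain ⟨C, hC⟩ : ∃ C, ∀ x ∈ Set.Icc σ τ, |f x| ≤ C :=
    isCompact_Icc.exists_bound_of_continuousOn hf.continuousOn
  have hC0 : 0 ≤ C := le_trans (abs_nonneg _) (hC σ ⟨le_refl _, hστ.le⟩)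
  set m := (σ + τ) / 2 with hm
  have hσm : σ < m := by simp only [hm]; linarith
  have hmτ : m < τ := by simp only [hm]; linarith
  have meas : ∀ a b : ℝ, AEStronglyMeasurable (fun x => f x / w σ τ x)
      (volume.restrict (Set.uIoc a b)) :=
    fun a b => (hf.measurable.div (continuous_w σ τ).measurable).aestronglyMeasurable
  apply IntervalIntegrable.trans (b := m)
  · have hint : IntervalIntegrable
        (fun x => (C / Real.sqrt (τ - m)) * (x - σ) ^ (-(1/2) : ℝ)) volume σ m := by
      have h0 : IntervalIntegrable (fun x : ℝ => x ^ (-(1/2) : ℝ)) volume 0 (m - σ) :=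
        intervalIntegrable_rpow' (by norm_num)
      have h1 := (h0.comp_sub_right σ).const_mul (C / Real.sqrt (τ - m))
      simpa using h1
    refine hint.mono_fun (meas σ m) ?_
    refine Filter.eventually_of_mem (self_mem_ae_restrict measurableSet_uIoc) ?_
    intro x hx
    rw [Set.uIoc_of_le hσm.le] at hx
    have hxσ : 0 < x - σ := by linarith [hx.1]
    have hτx : 0 < τ - x := by linarith [hx.2, hmτ]
    have hτm : 0 < τ - m := by linarith
    have hwnn : (0:ℝ) ≤ w σ τ x := Real.sqrt_nonneg _
    have hw : w σ τ x = Real.sqrt (x - σ) * Real.sqrt (τ - x) := Real.sqrt_mul hxσ.le _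
    have h2 : Real.sqrt (x - σ) * Real.sqrt (τ - m) ≤ w σ τ x := by
      rw [hw]
      exact mul_le_mul_of_nonneg_left (Real.sqrt_le_sqrt (by linarith [hx.2])) (Real.sqrt_nonneg _)
    have hpos : 0 < Real.sqrt (x - σ) * Real.sqrt (τ - m) := by positivity
    have hb : |f x / w σ τ x| ≤ C / (Real.sqrt (x - σ) * Real.sqrt (τ - m)) := by
      rw [abs_div, abs_of_nonneg hwnn]
      exact div_le_div₀ hC0 (hC x ⟨(by linarith [hx.1]), (by linarith)⟩) hpos h2
    calc ‖f x / w σ τ x‖ ≤ C / (Real.sqrt (x - σ) * Real.sqrt (τ - m)) := hb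
      _ = (C / Real.sqrt (τ - m)) * (x - σ) ^ (-(1/2) : ℝ) := by
          rw [Real.rpow_neg hxσ.le, ← Real.sqrt_eq_rpow, div_mul_eq_div_div_swap,
            div_eq_mul_inv]
      _ ≤ ‖(C / Real.sqrt (τ - m)) * (x - σ) ^ (-(1/2) : ℝ)‖ := le_abs_self _
  · have hint : IntervalIntegrable
        (fun x => (C / Real.sqrt (m - σ)) * (τ - x) ^ (-(1/2) : ℝ)) volume m τ := by
      have h0 : IntervalIntegrable (fun x : ℝ => x ^ (-(1/2) : ℝ)) volume (τ - m) 0 :=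
        (intervalIntegrable_rpow' (by norm_num)).symm
      have h1 := (h0.comp_sub_left τ).const_mul (C / Real.sqrt (m - σ))
      simpa using h1
    refine hint.mono_fun (meas m τ) ?_
    refine Filter.eventually_of_mem (self_mem_ae_restrict measurableSet_uIoc) ?_
    intro x hx
    rw [Set.uIoc_of_le hmτ.le] at hx
    have hxσ : 0 < x - σ := by linarith [hx.1, hσm]
    have hτx : 0 ≤ τ - x := by linarith [hx.2]
    have hmσ : 0 < m - σ := by linarith
    have hw : w σ τ x = Real.sqrt (x - σ) * Real.sqrt (τ - x) := Real.sqrt_mul hxσ.le _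
    have h2 : Real.sqrt (m - σ) * Real.sqrt (τ - x) ≤ w σ τ x := by
      rw [hw]
      exact mul_le_mul_of_nonneg_right (Real.sqrt_le_sqrt (by linarith [hx.1])) (Real.sqrt_nonneg _)
    have hwnn : (0:ℝ) ≤ w σ τ x := Real.sqrt_nonneg _
    by_cases hxτ : x = τ
    · have hz : w σ τ x = 0 := by unfold w; rw [hxτ]; simp
      simp only [hz, div_zero, norm_zero]
      positivity
    have hτx' : 0 < τ - x := lt_of_le_of_ne hτx (fun h => hxτ (by linarith))
    have hpos : 0 < Real.sqrt (m - σ) * Real.sqrt (τ - x) := by positivity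
    have hb : |f x / w σ τ x| ≤ C / (Real.sqrt (m - σ) * Real.sqrt (τ - x)) := by
      rw [abs_div, abs_of_nonneg hwnn]
      exact div_le_div₀ hC0 (hC x ⟨(by linarith), hx.2⟩) hpos h2
    calc ‖f x / w σ τ x‖ ≤ C / (Real.sqrt (m - σ) * Real.sqrt (τ - x)) := hb
      _ = (C / Real.sqrt (m - σ)) * (τ - x) ^ (-(1/2) : ℝ) := by
          rw [Real.rpow_neg hτx'.le, ← Real.sqrt_eq_rpow, div_mul_eq_div_div,
            div_eq_mul_inv]
      _ ≤ ‖(C / Real.sqrt (m - σ)) * (τ - x) ^ (-(1/2) : ℝ)‖ := le_abs_self _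



noncomputable def muI (σ τ : ℝ) (n : ℕ) : ℝ := ∫ x in σ..τ, x ^ n / w σ τ x
noncomputable def nuI (σ τ : ℝ) (n : ℕ) : ℝ := ∫ x in σ..τ, x ^ n * w σ τ x

lemma w_eval_left (σ τ : ℝ) : w σ τ σ = 0 := by unfold w; simp
lemma w_eval_right (σ τ : ℝ) : w σ τ τ = 0 := by unfold w; simp

lemma w_pos {σ τ x : ℝ} (h1 : σ < x) (h2 : x < τ) : 0 < w σ τ x := by
  unfold w
  apply Real.sqrt_pos.2
  have := mul_pos (by linarith : (0:ℝ) < x - σ) (by linarith : (0:ℝ) < τ - x)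
  linarith

lemma hasDerivAt_w {σ τ x : ℝ} (h1 : σ < x) (h2 : x < τ) :
    HasDerivAt (w σ τ) ((σ + τ - 2*x) / (2 * w σ τ x)) x := by
  have hg : HasDerivAt (fun x => (x - σ) * (τ - x)) (σ + τ - 2*x) x := by
    have := ((hasDerivAt_id x).sub_const σ).mul ((hasDerivAt_const x τ).sub (hasDerivAt_id x))
    refine this.congr_deriv (Eq.symm ?_)
    simp only [id_eq, Pi.sub_apply]
    ring
  have hgx : (x - σ) * (τ - x) ≠ 0 := by
    have := w_pos h1 h2
    unfold w at this
    intro h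
    rw [h] at this
    simp at this
  have := (Real.hasDerivAt_sqrt hgx).comp x hg
  refine this.congr_deriv (Eq.symm ?_)
  unfold w
  field_simp

lemma mu_zero {σ τ : ℝ} (hστ : σ < τ) : muI σ τ 0 = Real.pi := by
  set c := (σ + τ) / 2 with hc
  set s := (τ - σ) / 2 with hs
  have hs0 : 0 < s := by rw [hs]; linarith
  have F := fun x => Real.arcsin ((x - c) / s)
  have hderiv : ∀ x ∈ Set.Ioo σ τ, HasDerivAt (fun x => Real.arcsin ((x - c) / s))
      (x ^ 0 / w σ τ x) x := by
    intro x hx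
    have hu1 : (x - c) / s < 1 := by
      rw [div_lt_one hs0]
      rw [hc, hs]; linarith [hx.2]
    have hu2 : -1 < (x - c) / s := by
      rw [lt_div_iff₀ hs0]
      rw [hc, hs]; linarith [hx.1]
    have ha := Real.hasDerivAt_arcsin (ne_of_gt hu2) (ne_of_lt hu1)
    have haff : HasDerivAt (fun x : ℝ => (x - c) / s) (1 / s) x := by
      have := ((hasDerivAt_id x).sub_const c).div_const s
      simpa using this
    have := ha.comp x haff
    refine this.congr_deriv (Eq.symm ?_)
    have hnn : (0:ℝ) ≤ 1 - ((x - c) / s) ^ 2 := by nlinarith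
    have key : Real.sqrt (1 - ((x - c) / s) ^ 2) * s = w σ τ x := by
      unfold w
      have harg : (x - σ) * (τ - x) = (1 - ((x - c) / s) ^ 2) * s ^ 2 := by
        field_simp
        ring
      rw [harg, Real.sqrt_mul hnn, Real.sqrt_sq hs0.le]
    rw [pow_zero, ← key]
    exact (one_div_mul_one_div _ _).symm
  have hcont : ContinuousOn (fun x => Real.arcsin ((x - c) / s)) (Set.Icc σ τ) :=
    (Real.continuous_arcsin.comp (by continuity)).continuousOn
  have hint : IntervalIntegrable (fun x => x ^ 0 / w σ τ x) volume σ τ :=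
    intervalIntegrable_div_w hστ (by continuity)
  have := integral_eq_sub_of_hasDerivAt_of_le hστ.le hcont hderiv hint
  unfold muI
  rw [this]
  have h1 : (τ - c) / s = 1 := by
    rw [div_eq_one_iff_eq hs0.ne', hc, hs]; ring
  have h2 : (σ - c) / s = -1 := by
    rw [div_eq_iff hs0.ne', hc, hs]; ring
  rw [h1, h2, Real.arcsin_one, Real.arcsin_neg_one]
  ring

lemma ftc_rec {σ τ : ℝ} (hστ : σ < τ) (n : ℕ) :
    (n : ℝ) * nuI σ τ (n - 1) + ((σ + τ)/2) * muI σ τ n - muI σ τ (n + 1) = 0 := by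
  set c := (σ + τ) / 2 with hc
  have hcontw := continuous_w σ τ
  have hA : IntervalIntegrable (fun x => (n:ℝ) * (x ^ (n-1) * w σ τ x)) volume σ τ :=
    (continuous_const.mul ((continuous_pow _).mul hcontw)).intervalIntegrable _ _
  have hB : IntervalIntegrable (fun x => (c * x ^ n - x ^ (n+1)) / w σ τ x) volume σ τ :=
    intervalIntegrable_div_w hστ (by continuity)
  have hBc : IntervalIntegrable (fun x => c * (x ^ n / w σ τ x)) volume σ τ :=
    (intervalIntegrable_div_w hστ (continuous_pow n)).const_mul c
  have hB2 : IntervalIntegrable (fun x => x ^ (n+1) / w σ τ x) volume σ τ :=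
    intervalIntegrable_div_w hστ (continuous_pow _)
  have hderiv : ∀ x ∈ Set.Ioo σ τ, HasDerivAt (fun x => x ^ n * w σ τ x)
      ((n:ℝ) * (x ^ (n-1) * w σ τ x) + (c * x ^ n - x ^ (n+1)) / w σ τ x) x := by
    intro x hx
    have hw0 := (w_pos hx.1 hx.2).ne'
    have := (hasDerivAt_pow n x).mul (hasDerivAt_w hx.1 hx.2)
    refine this.congr_deriv (Eq.symm ?_)
    field_simp
    ring
  have hcont : ContinuousOn (fun x => x ^ n * w σ τ x) (Set.Icc σ τ) :=
    ((continuous_pow n).mul hcontw).continuousOn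
  have hint := hA.add hB
  have h0 := integral_eq_sub_of_hasDerivAt_of_le hστ.le hcont hderiv hint
  rw [w_eval_left, w_eval_right, mul_zero, mul_zero, sub_zero] at h0
  rw [integral_add hA hB, intervalIntegral.integral_const_mul] at h0
  have hBsplit : ∫ x in σ..τ, (c * x ^ n - x ^ (n+1)) / w σ τ x
      = c * muI σ τ n - muI σ τ (n+1) := by
    have heq : ∀ x : ℝ, (c * x ^ n - x ^ (n+1)) / w σ τ x
        = c * (x ^ n / w σ τ x) - x ^ (n+1) / w σ τ x := by
      intro x; rw [sub_div, mul_div_assoc]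
    simp only [heq]
    rw [integral_sub hBc hB2, intervalIntegral.integral_const_mul]
    rfl
  rw [hBsplit] at h0
  unfold nuI
  linarith [h0]

lemma nu_eq {σ τ : ℝ} (hστ : σ < τ) (n : ℕ) :
    nuI σ τ n = (σ+τ) * muI σ τ (n+1) - (σ*τ) * muI σ τ n - muI σ τ (n+2) := by
  have hcongr : Set.EqOn (fun x => x ^ n * w σ τ x)
      (fun x => ((σ+τ) * x^(n+1) - (σ*τ) * x^n - x^(n+2)) / w σ τ x) (Set.uIcc σ τ) := by
    intro x hx
    rw [Set.uIcc_of_le hστ.le] at hx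
    have hg : 0 ≤ (x - σ) * (τ - x) := mul_nonneg (by linarith [hx.1]) (by linarith [hx.2])
    have hw2 : w σ τ x * w σ τ x = (x - σ) * (τ - x) := Real.mul_self_sqrt hg
    by_cases h0 : w σ τ x = 0
    · simp only [h0, mul_zero, div_zero]
    · have hkey : ((σ+τ) * x^(n+1) - (σ*τ) * x^n - x^(n+2)) = x^n * (w σ τ x * w σ τ x) := by
        rw [hw2]; ring
      simp only [hkey, mul_div_assoc, mul_div_cancel_right₀ _ h0]
  have h1 : IntervalIntegrable (fun x => (σ+τ) * (x ^ (n+1) / w σ τ x)) volume σ τ :=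
    (intervalIntegrable_div_w hστ (continuous_pow _)).const_mul _
  have h2 : IntervalIntegrable (fun x => (σ*τ) * (x ^ n / w σ τ x)) volume σ τ :=
    (intervalIntegrable_div_w hστ (continuous_pow _)).const_mul _
  have h3 : IntervalIntegrable (fun x => x ^ (n+2) / w σ τ x) volume σ τ :=
    intervalIntegrable_div_w hστ (continuous_pow _)
  unfold nuI
  rw [integral_congr hcongr]
  have heq : ∀ x : ℝ, ((σ+τ) * x^(n+1) - (σ*τ) * x^n - x^(n+2)) / w σ τ x
      = (σ+τ) * (x ^ (n+1) / w σ τ x) - (σ*τ) * (x ^ n / w σ τ x) - x^(n+2) / w σ τ x := by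
    intro x; rw [sub_div, sub_div, mul_div_assoc, mul_div_assoc]
  simp only [heq]
  rw [integral_sub (h1.sub h2) h3, integral_sub h1 h2, intervalIntegral.integral_const_mul, intervalIntegral.integral_const_mul]
  rfl


section Conv
variable (μ : ℕ → ℝ) (c pr : ℝ)

noncomputable def PP (m : ℕ) : ℝ := ∑ i ∈ range (m+1), μ i * μ (m - i)

lemma L_twice (m : ℕ) :
    2 * (∑ i ∈ range (m+1), (i:ℝ) * (μ i * μ (m - i))) = (m:ℝ) * PP μ m := by
  have hrefl : ∑ i ∈ range (m+1), ((m - i : ℕ):ℝ) * (μ (m-i) * μ (m - (m - i)))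
      = ∑ i ∈ range (m+1), (i:ℝ) * (μ i * μ (m - i)) := by
    have := Finset.sum_range_reflect (fun i => (i:ℝ) * (μ i * μ (m - i))) (m+1)
    simpa using this
  rw [two_mul]
  nth_rewrite 2 [← hrefl]
  rw [← Finset.sum_add_distrib]
  unfold PP
  rw [Finset.mul_sum]
  apply Finset.sum_congr rfl
  intro i hi
  have him : i ≤ m := Nat.lt_succ_iff.mp (Finset.mem_range.mp hi)
  rw [Nat.sub_sub_self him, Nat.cast_sub him]
  ring

lemma hrec' (hμ1 : μ 1 = c * μ 0)
    (hrec : ∀ n : ℕ, ((n:ℝ) + 2) * μ (n+2) = (2*(n:ℝ)+3)*c*μ (n+1) - ((n:ℝ)+1)*pr*μ n)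
    (i : ℕ) :
    ((i:ℝ)+1) * μ (i+1) = (2*(i:ℝ)+1)*c*μ i - (i:ℝ)*pr*μ (i-1) := by
  cases i with
  | zero => simp [hμ1]
  | succ j =>
      have h := hrec j
      push_cast
      push_cast at h
      simp only [show j+1+1 = j+2 from rfl, show j+1-1 = j from rfl]
      linear_combination h

lemma P_rec (hμ1 : μ 1 = c * μ 0)
    (hrec : ∀ n : ℕ, ((n:ℝ) + 2) * μ (n+2) = (2*(n:ℝ)+3)*c*μ (n+1) - ((n:ℝ)+1)*pr*μ n)
    (k : ℕ) : PP μ (k+2) = 2*c*PP μ (k+1) - pr * PP μ k := by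
  have hk2 : ((k:ℝ) + 2) ≠ 0 := by positivity
  apply mul_left_cancel₀ hk2
  have e0 : ((k:ℝ)+2) * PP μ (k+2)
      = 2 * ∑ i ∈ range (k+3), (i:ℝ) * (μ i * μ (k+2-i)) := by
    have := L_twice μ (k+2)
    push_cast at this
    rw [this]
  have e1 : ∑ i ∈ range (k+3), (i:ℝ) * (μ i * μ (k+2-i))
      = ∑ i ∈ range (k+2), ((i:ℝ)+1) * (μ (i+1) * μ (k+1-i)) := by
    have := Finset.sum_range_succ' (fun i => (i:ℝ) * (μ i * μ (k+2-i))) (k+2)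
    rw [this]
    simp only [Nat.cast_zero, zero_mul, add_zero]
    apply Finset.sum_congr rfl
    intro i hi
    have : k + 2 - (i+1) = k + 1 - i := by omega
    rw [this]
    push_cast
    ring
  have e2 : ∑ i ∈ range (k+2), ((i:ℝ)+1) * (μ (i+1) * μ (k+1-i))
      = c * ∑ i ∈ range (k+2), (2*(i:ℝ)+1) * (μ i * μ (k+1-i))
        - pr * ∑ i ∈ range (k+2), (i:ℝ) * (μ (i-1) * μ (k+1-i)) := by
    rw [Finset.mul_sum, Finset.mul_sum, ← Finset.sum_sub_distrib]
    apply Finset.sum_congr rfl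
    intro i hi
    have h := hrec' μ c pr hμ1 hrec i
    calc ((i:ℝ)+1) * (μ (i+1) * μ (k+1-i)) = (((i:ℝ)+1) * μ (i+1)) * μ (k+1-i) := by ring
      _ = ((2*(i:ℝ)+1)*c*μ i - (i:ℝ)*pr*μ (i-1)) * μ (k+1-i) := by rw [h]
      _ = c * ((2*(i:ℝ)+1) * (μ i * μ (k+1-i))) - pr * ((i:ℝ) * (μ (i-1) * μ (k+1-i))) := by
          ring
  have e3 : ∑ i ∈ range (k+2), (2*(i:ℝ)+1) * (μ i * μ (k+1-i)) = ((k:ℝ)+2) * PP μ (k+1) := by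
    have ht := L_twice μ (k+1)
    push_cast at ht
    calc ∑ i ∈ range (k+2), (2*(i:ℝ)+1) * (μ i * μ (k+1-i))
        = 2 * (∑ i ∈ range (k+2), (i:ℝ) * (μ i * μ (k+1-i)))
          + ∑ i ∈ range (k+2), μ i * μ (k+1-i) := by
          rw [Finset.mul_sum, ← Finset.sum_add_distrib]
          apply Finset.sum_congr rfl
          intro i _
          ring
      _ = ((k:ℝ)+1) * PP μ (k+1) + PP μ (k+1) := by rw [ht]; rfl
      _ = ((k:ℝ)+2) * PP μ (k+1) := by ring
  have e4 : 2 * ∑ i ∈ range (k+2), (i:ℝ) * (μ (i-1) * μ (k+1-i)) = ((k:ℝ)+2) * PP μ k := by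
    have hs : ∑ i ∈ range (k+2), (i:ℝ) * (μ (i-1) * μ (k+1-i))
        = ∑ i ∈ range (k+1), ((i:ℝ)+1) * (μ i * μ (k-i)) := by
      have := Finset.sum_range_succ' (fun i => (i:ℝ) * (μ (i-1) * μ (k+1-i))) (k+1)
      rw [this]
      simp only [Nat.cast_zero, zero_mul, add_zero]
      apply Finset.sum_congr rfl
      intro i hi
      have h1 : i + 1 - 1 = i := by omega
      have h2 : k + 1 - (i+1) = k - i := by omega
      rw [h1, h2]
      push_cast
      ring
    rw [hs]
    have ht := L_twice μ k
    calc 2 * ∑ i ∈ range (k+1), ((i:ℝ)+1) * (μ i * μ (k-i))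
        = 2 * (∑ i ∈ range (k+1), (i:ℝ) * (μ i * μ (k-i))) + 2 * ∑ i ∈ range (k+1), μ i * μ (k-i) := by
          rw [Finset.mul_sum, Finset.mul_sum, Finset.mul_sum, ← Finset.sum_add_distrib]
          apply Finset.sum_congr rfl
          intro i _
          ring
      _ = (k:ℝ) * PP μ k + 2 * PP μ k := by rw [ht]; rfl
      _ = ((k:ℝ)+2) * PP μ k := by ring
  calc ((k:ℝ)+2) * PP μ (k+2)
      = 2 * ∑ i ∈ range (k+3), (i:ℝ) * (μ i * μ (k+2-i)) := e0
    _ = 2 * (c * (((k:ℝ)+2) * PP μ (k+1)) - pr * ∑ i ∈ range (k+2), (i:ℝ) * (μ (i-1) * μ (k+1-i))) := by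
        rw [e1, e2, e3]
    _ = 2*c*(((k:ℝ)+2) * PP μ (k+1)) - pr * (2 * ∑ i ∈ range (k+2), (i:ℝ) * (μ (i-1) * μ (k+1-i))) := by
        ring
    _ = 2*c*(((k:ℝ)+2) * PP μ (k+1)) - pr * (((k:ℝ)+2) * PP μ k) := by rw [e4]
    _ = ((k:ℝ)+2) * (2*c*PP μ (k+1) - pr * PP μ k) := by ring

lemma conv_identity (hμ1 : μ 1 = c * μ 0)
    (hrec : ∀ n : ℕ, ((n:ℝ) + 2) * μ (n+2) = (2*(n:ℝ)+3)*c*μ (n+1) - ((n:ℝ)+1)*pr*μ n)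
    (k : ℕ) :
    ∑ i ∈ range k, μ i * (2*c*μ (k-i) - pr*μ (k-1-i) - μ (k+1-i))
      = μ 0 * μ (k+1) - c * μ 0 * μ k := by
  cases k with
  | zero => simp [hμ1]; ring
  | succ K =>
      have hsplit : ∑ i ∈ range (K+1), μ i * (2*c*μ (K+1-i) - pr*μ (K+1-1-i) - μ (K+1+1-i))
          = 2*c*(∑ i ∈ range (K+1), μ i * μ (K+1-i))
            - pr*(∑ i ∈ range (K+1), μ i * μ (K-i))
            - ∑ i ∈ range (K+1), μ i * μ (K+2-i) := by
        rw [Finset.mul_sum, Finset.mul_sum, ← Finset.sum_sub_distrib, ← Finset.sum_sub_distrib]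
        apply Finset.sum_congr rfl
        intro i hi
        have h1 : K + 1 - 1 - i = K - i := by omega
        have h2 : K + 1 + 1 - i = K + 2 - i := by omega
        rw [h1, h2]
        ring
      rw [hsplit]
      have p1 : ∑ i ∈ range (K+1), μ i * μ (K+1-i) = PP μ (K+1) - μ (K+1) * μ 0 := by
        have := Finset.sum_range_succ (fun i => μ i * μ (K+1-i)) (K+1)
        unfold PP
        rw [this]
        simp
      have p2 : ∑ i ∈ range (K+1), μ i * μ (K-i) = PP μ K := rfl
      have p3 : ∑ i ∈ range (K+1), μ i * μ (K+2-i)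
          = PP μ (K+2) - μ (K+2) * μ 0 - μ (K+1) * μ 1 := by
        have h1 := Finset.sum_range_succ (fun i => μ i * μ (K+2-i)) (K+2)
        have h2 := Finset.sum_range_succ (fun i => μ i * μ (K+2-i)) (K+1)
        unfold PP
        rw [h1, h2]
        have e1 : K + 2 - (K+2) = 0 := by omega
        have e2 : K + 2 - (K+1) = 1 := by omega
        rw [e1, e2]
        ring
      rw [p1, p2, p3, P_rec μ c pr hμ1 hrec K, hμ1]
      ring

end Conv



lemma eval_deriv_sum (p : Polynomial ℝ) (x : ℝ) :
    p.derivative.eval x = ∑ k ∈ range (p.natDegree + 1), p.coeff k * ((k:ℝ) * x ^ (k-1)) := by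
  set d := p.natDegree with hd
  have hlt : p.derivative.natDegree < d + 1 :=
    lt_of_le_of_lt (Polynomial.natDegree_derivative_le p) (by omega)
  rw [Polynomial.eval_eq_sum_range' hlt]
  simp only [Polynomial.coeff_derivative]
  rw [Finset.sum_range_succ' (fun k => p.coeff k * ((k:ℝ) * x ^ (k-1))) d]
  rw [Finset.sum_range_succ (fun k => p.coeff (k+1) * ((k:ℝ)+1) * x ^ k) d]
  have hz : p.coeff (d + 1) = 0 :=
    Polynomial.coeff_eq_zero_of_natDegree_lt (by omega)
  rw [hz]
  simp only [Nat.cast_zero, zero_mul, mul_zero, add_zero, zero_add]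
  apply Finset.sum_congr rfl
  intro i _
  simp only [Nat.add_sub_cancel]
  push_cast
  ring

lemma divDiff_expand (Q : Polynomial ℝ) (x t : ℝ) :
    divDiff Q x t = ∑ k ∈ range (Q.derivative.natDegree + 1),
      Q.derivative.coeff k * ∑ i ∈ range k, x ^ i * t ^ (k - 1 - i) := by
  set p := Q.derivative with hp
  unfold divDiff
  by_cases h : x = t
  · rw [if_pos h]
    subst h
    rw [eval_deriv_sum]
    apply Finset.sum_congr rfl
    intro k _
    congr 1
    have hterm : ∀ i ∈ range k, x ^ i * x ^ (k-1-i) = x ^ (k-1) := by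
      intro i hi
      rw [← pow_add]
      congr 1
      have := Finset.mem_range.mp hi
      omega
    rw [Finset.sum_congr rfl hterm, Finset.sum_const, Finset.card_range, nsmul_eq_mul]
  · rw [if_neg h]
    have hxt : x - t ≠ 0 := sub_ne_zero.2 h
    rw [div_eq_iff hxt]
    rw [Polynomial.eval_eq_sum_range (x := x), Polynomial.eval_eq_sum_range (x := t),
      ← Finset.sum_sub_distrib, Finset.sum_mul]
    apply Finset.sum_congr rfl
    intro k _
    rw [mul_assoc, geom_sum₂_mul]
    ring



lemma mu_one {σ τ : ℝ} (hστ : σ < τ) : muI σ τ 1 = ((σ+τ)/2) * muI σ τ 0 := by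
  have h := ftc_rec hστ 0
  norm_num at h
  linarith

lemma mu_rec {σ τ : ℝ} (hστ : σ < τ) (n : ℕ) :
    ((n:ℝ) + 2) * muI σ τ (n+2)
      = (2*(n:ℝ)+3)*((σ+τ)/2)*muI σ τ (n+1) - ((n:ℝ)+1)*(σ*τ)*muI σ τ n := by
  have h1 := ftc_rec hστ (n+1)
  have h2 := nu_eq hστ n
  push_cast at h1
  linear_combination (-1 : ℝ) * h1 + ((n:ℝ)+1) * h2

lemma conv_mu {σ τ : ℝ} (hστ : σ < τ) (k : ℕ) :
    ∑ i ∈ range k, nuI σ τ (k-1-i) * muI σ τ i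
      = Real.pi * muI σ τ (k+1) - ((σ+τ)/2) * Real.pi * muI σ τ k := by
  have hc := conv_identity (muI σ τ) ((σ+τ)/2) (σ*τ) (mu_one hστ) (mu_rec hστ) k
  have hsum : ∑ i ∈ range k, nuI σ τ (k-1-i) * muI σ τ i
      = ∑ i ∈ range k, muI σ τ i
          * (2*((σ+τ)/2)*muI σ τ (k-i) - (σ*τ)*muI σ τ (k-1-i) - muI σ τ (k+1-i)) := by
    apply Finset.sum_congr rfl
    intro i hi
    have hik := Finset.mem_range.mp hi
    have hν := nu_eq hστ (k-1-i)
    have e1 : k-1-i+1 = k-i := by omega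
    have e2 : k-1-i+2 = k+1-i := by omega
    rw [e1, e2] at hν
    rw [hν]
    ring
  rw [hsum, hc, mu_zero hστ]

lemma key_k {σ τ : ℝ} (hστ : σ < τ) (k : ℕ) (a : ℝ) :
    (∫ x in σ..τ, (a * ((1/(2*Real.pi)) * (∑ i ∈ range k, x^i * nuI σ τ (k-1-i))
        + (1/2) * (((σ+τ)/2) * x^k - x^(k+1)))) / w σ τ x) = 0 := by
  have hpt : ∀ x : ℝ, (a * ((1/(2*Real.pi)) * (∑ i ∈ range k, x^i * nuI σ τ (k-1-i))
        + (1/2) * (((σ+τ)/2) * x^k - x^(k+1)))) / w σ τ x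
      = a * ((1/(2*Real.pi)) * (∑ i ∈ range k, nuI σ τ (k-1-i) * (x^i / w σ τ x))
        + (1/2) * (((σ+τ)/2) * (x^k / w σ τ x) - x^(k+1) / w σ τ x)) := by
    intro x
    have hs : ∑ i ∈ range k, nuI σ τ (k-1-i) * (x^i / w σ τ x)
        = (∑ i ∈ range k, x^i * nuI σ τ (k-1-i)) / w σ τ x := by
      rw [Finset.sum_div]
      refine Finset.sum_congr rfl fun i _ => ?_
      rw [← mul_div_assoc, mul_comm (nuI σ τ (k-1-i)) (x^i)]
    rw [hs, ← mul_div_assoc ((σ+τ)/2) (x^k), ← sub_div, ← mul_div_assoc (1/(2*Real.pi)),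
      ← mul_div_assoc (1/2), ← add_div, ← mul_div_assoc]
  simp only [hpt]
  have hUi : ∀ i : ℕ, IntervalIntegrable
      (fun x => nuI σ τ (k-1-i) * (x^i / w σ τ x)) volume σ τ :=
    fun i => (intervalIntegrable_div_w hστ (continuous_pow i)).const_mul _
  have hU : IntervalIntegrable
      (fun x => (1/(2*Real.pi)) * (∑ i ∈ range k, nuI σ τ (k-1-i) * (x^i / w σ τ x)))
      volume σ τ := by
    have : ∀ x : ℝ, (∑ i ∈ range k, nuI σ τ (k-1-i) * (x^i / w σ τ x))
        = (∑ i ∈ range k, nuI σ τ (k-1-i) * x^i) / w σ τ x := by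
      intro x
      rw [Finset.sum_div]
      exact Finset.sum_congr rfl fun i _ => (mul_div_assoc _ _ _).symm
    simp only [this]
    exact (intervalIntegrable_div_w hστ
      (continuous_finset_sum _ fun i _ => continuous_const.mul (continuous_pow i))).const_mul _
  have hVk : IntervalIntegrable (fun x => ((σ+τ)/2) * (x^k / w σ τ x)) volume σ τ :=
    (intervalIntegrable_div_w hστ (continuous_pow k)).const_mul _
  have hVk1 : IntervalIntegrable (fun x => x^(k+1) / w σ τ x) volume σ τ :=
    intervalIntegrable_div_w hστ (continuous_pow (k+1))
  have hV : IntervalIntegrable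
      (fun x => (1/2) * (((σ+τ)/2) * (x^k / w σ τ x) - x^(k+1) / w σ τ x)) volume σ τ :=
    (hVk.sub hVk1).const_mul _
  rw [intervalIntegral.integral_const_mul, integral_add hU hV, intervalIntegral.integral_const_mul, intervalIntegral.integral_const_mul,
    intervalIntegral.integral_finset_sum (fun i _ => hUi i), integral_sub hVk hVk1,
    intervalIntegral.integral_const_mul]
  simp only [intervalIntegral.integral_const_mul]
  have hμ : ∀ i : ℕ, (∫ x in σ..τ, x ^ i / w σ τ x) = muI σ τ i := fun i => rfl
  simp only [hμ]
  rw [conv_mu hστ k]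
  have hπ := Real.pi_ne_zero
  field_simp
  ring





lemma inner_integral {σ τ : ℝ} (hστ : σ < τ) (Q : Polynomial ℝ) (x : ℝ) :
    (∫ t in σ..τ, divDiff Q x t * Real.sqrt ((t - σ) * (τ - t)))
      = ∑ k ∈ range (Q.derivative.natDegree + 1),
          Q.derivative.coeff k * ∑ i ∈ range k, x ^ i * nuI σ τ (k-1-i) := by
  set N := Q.derivative.natDegree + 1 with hN
  have hpt : ∀ t : ℝ, divDiff Q x t * Real.sqrt ((t - σ) * (τ - t))
      = ∑ k ∈ range N, ∑ i ∈ range k,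
          (Q.derivative.coeff k * x ^ i) * (t ^ (k-1-i) * w σ τ t) := by
    intro t
    rw [divDiff_expand, Finset.sum_mul]
    refine Finset.sum_congr rfl fun k _ => ?_
    rw [Finset.mul_sum, Finset.sum_mul]
    refine Finset.sum_congr rfl fun i _ => ?_
    show Q.derivative.coeff k * (x ^ i * t ^ (k-1-i)) * w σ τ t = _
    ring
  simp only [hpt]
  rw [intervalIntegral.integral_finset_sum
    (f := fun k t => ∑ i ∈ range k, (Q.derivative.coeff k * x ^ i) * (t ^ (k-1-i) * w σ τ t))
    (fun k _ =>
    (continuous_finset_sum _ fun i _ =>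
      continuous_const.mul ((continuous_pow _).mul (continuous_w σ τ))).intervalIntegrable _ _)]
  refine Finset.sum_congr rfl fun k _ => ?_
  rw [intervalIntegral.integral_finset_sum
    (f := fun i t => (Q.derivative.coeff k * x ^ i) * (t ^ (k-1-i) * w σ τ t)) (fun i _ =>
    (continuous_const.mul ((continuous_pow _).mul (continuous_w σ τ))).intervalIntegrable _ _)]
  rw [Finset.mul_sum]
  refine Finset.sum_congr rfl fun i _ => ?_
  rw [intervalIntegral.integral_const_mul]
  have : (∫ t in σ..τ, t ^ (k-1-i) * w σ τ t) = nuI σ τ (k-1-i) := rfl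
  rw [this]
  ring

noncomputable def FF (σ τ : ℝ) (Q : Polynomial ℝ) (k : ℕ) (x : ℝ) : ℝ :=
  Q.derivative.coeff k * ((1/(2*Real.pi)) * (∑ i ∈ range k, x^i * nuI σ τ (k-1-i))
    + (1/2) * (((σ+τ)/2) * x^k - x^(k+1)))

lemma FF_cont (σ τ : ℝ) (Q : Polynomial ℝ) (k : ℕ) : Continuous (FF σ τ Q k) := by
  unfold FF
  refine continuous_const.mul ?_
  exact (continuous_const.mul (continuous_finset_sum _ fun i _ =>
    (continuous_pow i).mul continuous_const)).add
    (continuous_const.mul ((continuous_const.mul (continuous_pow k)).sub (continuous_pow (k+1))))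

lemma FF_int_zero {σ τ : ℝ} (hστ : σ < τ) (Q : Polynomial ℝ) (k : ℕ) :
    (∫ x in σ..τ, FF σ τ Q k x / w σ τ x) = 0 :=
  key_k hστ k (Q.derivative.coeff k)

/-- The density `h(x) = (1/π)·r(x)/√((x−σ)(τ−x))` on `[σ,τ]` has total mass `1`. -/
theorem rFun_density_mass_one (Q : Polynomial ℝ) (σ τ : ℝ) (hστ : σ < τ) :
    (1 / Real.pi) * (∫ x in σ..τ, rFun Q σ τ x / Real.sqrt ((x - σ) * (τ - x))) = 1 := by
  set N := Q.derivative.natDegree + 1 with hN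
  have hr : ∀ x : ℝ, rFun Q σ τ x = (∑ k ∈ range N, FF σ τ Q k x) + 1 := by
    intro x
    unfold rFun
    rw [inner_integral hστ Q x]
    rw [Polynomial.eval_eq_sum_range (x := x)]
    rw [Finset.mul_sum, Finset.mul_sum, ← Finset.sum_add_distrib]
    congr 1
    refine Finset.sum_congr rfl fun k _ => ?_
    unfold FF
    ring
  have hIs : IntervalIntegrable
      (fun x => (∑ k ∈ range N, FF σ τ Q k x) / w σ τ x) volume σ τ :=
    intervalIntegrable_div_w hστ (continuous_finset_sum _ fun k _ => FF_cont σ τ Q k)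
  have hI1 : IntervalIntegrable (fun x => 1 / w σ τ x) volume σ τ :=
    intervalIntegrable_div_w hστ continuous_const
  have h2 : (∫ x in σ..τ, rFun Q σ τ x / Real.sqrt ((x - σ) * (τ - x))) = Real.pi := by
    have e1 : (∫ x in σ..τ, rFun Q σ τ x / Real.sqrt ((x - σ) * (τ - x)))
        = ∫ x in σ..τ, ((∑ k ∈ range N, FF σ τ Q k x) / w σ τ x + 1 / w σ τ x) := by
      apply intervalIntegral.integral_congr
      intro x _
      show rFun Q σ τ x / w σ τ x = _
      rw [hr x, add_div]
    rw [e1, integral_add hIs hI1]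
    have e2 : (∫ x in σ..τ, (∑ k ∈ range N, FF σ τ Q k x) / w σ τ x) = 0 := by
      have : ∀ x : ℝ, (∑ k ∈ range N, FF σ τ Q k x) / w σ τ x
          = ∑ k ∈ range N, FF σ τ Q k x / w σ τ x := fun x => Finset.sum_div _ _ _
      simp only [this]
      rw [intervalIntegral.integral_finset_sum (fun k _ =>
        intervalIntegrable_div_w hστ (FF_cont σ τ Q k))]
      exact Finset.sum_eq_zero fun k _ => FF_int_zero hστ Q k
    have e3 : (∫ x in σ..τ, 1 / w σ τ x) = Real.pi := by
      have := mu_zero hστ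
      unfold muI at this
      simp only [pow_zero] at this
      exact this
    rw [e2, e3, zero_add]
  rw [h2, one_div, inv_mul_cancel₀ Real.pi_ne_zero]
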